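/- There exists a constant C > 0 such that for all α ∈ (0, 1/2), ex(α) ≤ e^{C·√(log(1/α))}·α. -/

import Mathlib

open Filter MeasureTheory Pointwise

/-- `exZMod p λ α` is the minimum of `|A + λ·A|/p` over all `A ⊆ ℤ/pℤ` with `|A| ≥ αp`,
where `A + λ·A = {a + λa' : a, a' ∈ A}`. -/
noncomputable def exZMod (p : ℕ) (lam : ℤ) (α : ℝ) : ℝ :=
  sInf {x : ℝ | ∃ A : Finset (ZMod p), α * p ≤ (A.card : ℝ) ∧
    x = (((A + A.image fun a => (lam : ZMod p) * a).card : ℝ)) / p}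

/-- `exLam λ α` is the limsup of `exZMod p λ α` over primes `p → ∞`. -/
noncomputable def exLam (lam : ℤ) (α : ℝ) : ℝ :=
  Filter.limsup (fun p => exZMod p lam α) (Filter.atTop ⊓ Filter.principal {p : ℕ | p.Prime})

/-- `exD α` is the limsup of `exLam λ α` as `λ → ∞`. -/
noncomputable def exD (α : ℝ) : ℝ :=
  Filter.limsup (fun lam : ℤ => exLam lam α) Filter.atTop


namespace ExDAux

/-- Set of naturals with `k` base-`n` digits, each `< m`. -/
def Rset (n m : ℕ) : ℕ → Finset ℕ
  | 0 => {0}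
  | (k+1) => ((Finset.range m) ×ˢ (Rset n m k)).image (fun q => q.1 + n * q.2)

lemma mem_Rset_succ {n m k r : ℕ} :
    r ∈ Rset n m (k+1) ↔ ∃ a r₀, a < m ∧ r₀ ∈ Rset n m k ∧ r = a + n * r₀ := by
  simp only [Rset, Finset.mem_image, Finset.mem_product, Finset.mem_range, Prod.exists]
  constructor
  · rintro ⟨a, r₀, ⟨ha, hr₀⟩, h⟩; exact ⟨a, r₀, ha, hr₀, h.symm⟩
  · rintro ⟨a, r₀, ha, hr₀, h⟩; exact ⟨a, r₀, ⟨ha, hr₀⟩, h.symm⟩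

lemma Rset_add_lt {n m : ℕ} (h2m : 2 * m ≤ n) :
    ∀ k, ∀ r ∈ Rset n m k, ∀ s ∈ Rset n m k, r + s < n ^ k := by
  intro k
  induction k with
  | zero => intro r hr s hs
            simp [Rset] at hr hs; simp [hr, hs]
  | succ k ih =>
    intro r hr s hs
    obtain ⟨a, r₀, ha, hr₀, rfl⟩ := mem_Rset_succ.1 hr
    obtain ⟨b, s₀, hb, hs₀, rfl⟩ := mem_Rset_succ.1 hs
    have h1 : r₀ + s₀ < n ^ k := ih r₀ hr₀ s₀ hs₀
    have hn : 2 ≤ n := by omega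
    have : a + b + n * (r₀ + s₀) < n ^ (k+1) := by
      have : a + b + 2 ≤ n := by omega
      have h2 : n * (r₀ + s₀) + n ≤ n * n ^ k := by
        have := Nat.mul_le_mul_left n h1
        nlinarith [Nat.mul_le_mul_left n h1]
      calc a + b + n * (r₀ + s₀) < n + n * (r₀ + s₀) := by omega
        _ ≤ n * n ^ k := by omega
        _ = n ^ (k+1) := by ring
    calc (a + n * r₀) + (b + n * s₀) = a + b + n * (r₀ + s₀) := by ring
      _ < n ^ (k+1) := this

lemma Rset_lt {n m : ℕ} (h2m : 2 * m ≤ n) {k r : ℕ} (hr : r ∈ Rset n m k) : r < n ^ k :=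
  lt_of_le_of_lt (Nat.le_add_right r r) (Rset_add_lt h2m k r hr r hr)

lemma card_Rset {n m : ℕ} (hm : m ≤ n) (hn : 0 < n) (k : ℕ) : (Rset n m k).card = m ^ k := by
  induction k with
  | zero => simp [Rset]
  | succ k ih =>
    rw [Rset, Finset.card_image_of_injOn, Finset.card_product, Finset.card_range, ih]
    · ring
    · rintro ⟨a, r₀⟩ h1 ⟨b, s₀⟩ h2 he
      simp only [Finset.mem_coe, Finset.mem_product, Finset.mem_range] at h1 h2
      simp only at he
      have ha : a < n := lt_of_lt_of_le h1.1 hm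
      have hb : b < n := lt_of_lt_of_le h2.1 hm
      have h3 : (a + n * r₀) % n = a := by
        rw [Nat.add_mul_mod_self_left]; exact Nat.mod_eq_of_lt ha
      have h4 : (b + n * s₀) % n = b := by
        rw [Nat.add_mul_mod_self_left]; exact Nat.mod_eq_of_lt hb
      have hab : a = b := by rw [← h3, ← h4, he]
      have : r₀ = s₀ := by
        subst hab
        have := Nat.eq_of_mul_eq_mul_left hn (by omega : n * r₀ = n * s₀)
        exact this
      simp [hab, this]

lemma div_mem_Rset {n m k r : ℕ} (hm : 0 < m) (hmn : m ≤ n) (hr : r ∈ Rset n m (k+1)) :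
    r / n ∈ Rset n m k := by
  obtain ⟨a, r₀, ha, hr₀, rfl⟩ := mem_Rset_succ.1 hr
  have hn : 0 < n := lt_of_lt_of_le hm hmn
  have : (a + n * r₀) / n = r₀ := by
    rw [Nat.add_mul_div_left _ _ hn, Nat.div_eq_of_lt (lt_of_lt_of_le ha hmn)]
    omega
  rw [this]; exact hr₀

lemma mod_mem_Rset {n m : ℕ} (h2m : 2 * m ≤ n) :
    ∀ k r, r ∈ Rset n m (k+1) → r % n ^ k ∈ Rset n m k := by
  intro k
  induction k with
  | zero => intro r hr; simp [Rset, Nat.mod_one]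
  | succ k ih =>
    intro r hr
    obtain ⟨a, r₀, ha, hr₀, rfl⟩ := mem_Rset_succ.1 hr
    have h1 : r₀ % n ^ k ∈ Rset n m k := ih r₀ hr₀
    have hlt : a + n * (r₀ % n ^ k) < n ^ (k+1) := by
      have := Rset_add_lt h2m (k+1) (a + n * (r₀ % n ^ k)) (mem_Rset_succ.2 ⟨a, _, ha, h1, rfl⟩)
        (a + n * (r₀ % n ^ k)) (mem_Rset_succ.2 ⟨a, _, ha, h1, rfl⟩)
      omega
    have : (a + n * r₀) % n ^ (k+1) = a + n * (r₀ % n ^ k) := by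
      conv_lhs => rw [show r₀ = r₀ % n ^ k + n ^ k * (r₀ / n ^ k) from (Nat.mod_add_div _ _).symm]
      rw [show a + n * (r₀ % n ^ k + n ^ k * (r₀ / n ^ k))
          = a + n * (r₀ % n ^ k) + n ^ (k+1) * (r₀ / n ^ k) by ring]
      rw [Nat.add_mul_mod_self_left, Nat.mod_eq_of_lt hlt]
    rw [this]
    exact mem_Rset_succ.2 ⟨a, _, ha, h1, rfl⟩

end ExDAux

namespace ExDAux2
open ExDAux

lemma lt_div_add_one_mul {a b : ℕ} (hb : 0 < b) : a < (a / b + 1) * b := by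
  calc a = b * (a / b) + a % b := (Nat.div_add_mod a b).symm
    _ < b * (a / b) + b := by have := Nat.mod_lt a hb; omega
    _ = (a / b + 1) * b := by ring

lemma card_Rset_add_Rset {n m : ℕ} (hm : 1 ≤ m) (h2m : 2 * m ≤ n) (k : ℕ) :
    (Rset n m k + Rset n m k).card ≤ (2 * m - 1) ^ k := by
  induction k with
  | zero =>
    have : Rset n m 0 + Rset n m 0 = {0} := by
      apply Finset.Subset.antisymm
      · intro t ht
        rw [Finset.mem_add] at ht
        obtain ⟨r, hr, s, hs, rfl⟩ := ht
        simp [Rset] at hr hs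
        simp [hr, hs]
      · intro t ht
        simp at ht
        subst ht
        have h0 : (0:ℕ) ∈ Rset n m 0 := by simp [Rset]
        simpa using Finset.add_mem_add h0 h0
    simp [this]
  | succ k ih =>
    have hsub : Rset n m (k+1) + Rset n m (k+1) ⊆
        ((Finset.range (2*m-1)) ×ˢ (Rset n m k + Rset n m k)).image
          (fun q => q.1 + n * q.2) := by
      intro t ht
      rw [Finset.mem_add] at ht
      obtain ⟨r, hr, s, hs, rfl⟩ := ht
      obtain ⟨a, r₀, ha, hr₀, rfl⟩ := mem_Rset_succ.1 hr
      obtain ⟨b, s₀, hb, hs₀, rfl⟩ := mem_Rset_succ.1 hs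
      rw [Finset.mem_image]
      refine ⟨(a + b, r₀ + s₀), ?_, by ring⟩
      rw [Finset.mem_product]
      exact ⟨Finset.mem_range.2 (by omega), Finset.add_mem_add hr₀ hs₀⟩
    calc (Rset n m (k+1) + Rset n m (k+1)).card
        ≤ _ := Finset.card_le_card hsub
      _ ≤ ((Finset.range (2*m-1)) ×ˢ (Rset n m k + Rset n m k)).card :=
          Finset.card_image_le
      _ = (2*m-1) * (Rset n m k + Rset n m k).card := by
          rw [Finset.card_product, Finset.card_range]
      _ ≤ (2*m-1) * (2*m-1)^k := Nat.mul_le_mul_left _ ih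
      _ = (2*m-1)^(k+1) := by ring

lemma fiber_card_le {p Q' : ℕ} (hp : 0 < p) (hQ' : 0 < Q') (w : ℕ) :
    ((Finset.range p).filter (fun z => z * Q' / p = w)).card ≤ p / Q' + 2 := by
  have hsub : (Finset.range p).filter (fun z => z * Q' / p = w) ⊆
      Finset.Ico (w * p / Q') (w * p / Q' + (p / Q' + 2)) := by
    intro z hz
    rw [Finset.mem_filter, Finset.mem_range] at hz
    obtain ⟨hzp, hw⟩ := hz
    have h1 : w * p ≤ z * Q' := by
      rw [← hw]; exact Nat.div_mul_le_self _ _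
    have h2 : z * Q' < (w + 1) * p := by
      rw [← hw]; exact (Nat.div_lt_iff_lt_mul hp).1 (Nat.lt_succ_self _)
    rw [Finset.mem_Ico]
    constructor
    · calc w * p / Q' ≤ z * Q' / Q' := Nat.div_le_div_right h1
        _ = z := Nat.mul_div_cancel z hQ'
    · have e1 : w * p < (w * p / Q' + 1) * Q' := lt_div_add_one_mul hQ'
      have e2 : p < (p / Q' + 1) * Q' := lt_div_add_one_mul hQ'
      have : z * Q' < (w * p / Q' + (p / Q' + 2)) * Q' := by
        calc z * Q' < (w+1) * p := h2
          _ = w * p + p := by ring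
          _ < (w * p / Q' + 1) * Q' + (p / Q' + 1) * Q' := by omega
          _ = (w * p / Q' + (p / Q' + 2)) * Q' := by ring
      exact lt_of_mul_lt_mul_right this (Nat.zero_le _)
  calc _ ≤ (Finset.Ico (w * p / Q') (w * p / Q' + (p / Q' + 2))).card :=
        Finset.card_le_card hsub
    _ = p / Q' + 2 := by simp [Nat.card_Ico]

lemma block_subset_fiber {p Q r : ℕ} (hp : 0 < p) (hQ : 0 < Q) (hr : r + 1 ≤ Q) :
    Finset.Ico (r * p / Q + 1) (r * p / Q + p / Q) ⊆
      (Finset.range p).filter (fun x => x * Q / p = r) := by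
  intro x hx
  rw [Finset.mem_Ico] at hx
  obtain ⟨hlo, hhi⟩ := hx
  have e1 : (r * p / Q) * Q ≤ r * p := Nat.div_mul_le_self _ _
  have e2 : r * p < (r * p / Q + 1) * Q := lt_div_add_one_mul hQ
  have e3 : (p / Q) * Q ≤ p := Nat.div_mul_le_self _ _
  have h1 : r * p < x * Q := by
    calc r * p < (r * p / Q + 1) * Q := e2
      _ ≤ x * Q := Nat.mul_le_mul_right _ hlo
  have h2 : x * Q < (r + 1) * p := by
    have hx1 : x + 1 ≤ r * p / Q + p / Q := hhi
    have t1 : x * Q + Q ≤ (r * p / Q) * Q + (p / Q) * Q := by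
      calc x * Q + Q = (x + 1) * Q := by ring
        _ ≤ (r * p / Q + p / Q) * Q := Nat.mul_le_mul_right _ hx1
        _ = (r * p / Q) * Q + (p / Q) * Q := by ring
    have t2 : x * Q + Q ≤ r * p + p := by omega
    calc x * Q < x * Q + Q := by omega
      _ ≤ r * p + p := t2
      _ = (r + 1) * p := by ring
  have hxp : x < p := by
    have hh : x * Q < p * Q := by
      calc x * Q < (r + 1) * p := h2
        _ ≤ Q * p := Nat.mul_le_mul_right _ hr
        _ = p * Q := by ring
    exact lt_of_mul_lt_mul_right hh (Nat.zero_le _)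
  rw [Finset.mem_filter, Finset.mem_range]
  refine ⟨hxp, ?_⟩
  have hle : r ≤ x * Q / p := Nat.le_div_iff_mul_le hp |>.2 (le_of_lt h1)
  have hlt : x * Q / p < r + 1 := (Nat.div_lt_iff_lt_mul hp).2 h2
  omega

end ExDAux2

namespace ExDAux3
open ExDAux ExDAux2

lemma key_lemma {n m d p x x' : ℕ} (hd : 1 ≤ d) (hm : 1 ≤ m) (h2m : 2 * m ≤ n)
    (hp : 0 < p) (hx : x < p) (hx' : x' < p)
    (hr : x * n ^ d / p ∈ Rset n m d) (hr' : x' * n ^ d / p ∈ Rset n m d) :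
    ((x + n * x') % p) * n ^ (d - 1) / p ∈
      ((Rset n m (d-1) + Rset n m (d-1)) ×ˢ Finset.range 2).image
        (fun q => (q.1 + q.2) % n ^ (d-1)) := by
  have hn : 2 ≤ n := by omega
  set Q' := n ^ (d - 1) with hQ'def
  set Q := n ^ d with hQdef
  have hQQ' : Q = n * Q' := by
    rw [hQdef, hQ'def, ← pow_succ']
    congr 1
    omega
  have hQ' : 0 < Q' := Nat.pow_pos (by omega)
  have hQ : 0 < Q := Nat.pow_pos (by omega)
  set r := x * Q / p with hrdef
  set r' := x' * Q / p with hr'def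
  set z := (x + n * x') % p with hzdef
  set k := (x + n * x') / p with hkdef
  have hzp : z < p := Nat.mod_lt _ hp
  have hzk : z + p * k = x + n * x' := Nat.mod_add_div _ _
  set u := r' + r / n with hudef
  -- lower bound
  have f1 : r * p ≤ x * Q := Nat.div_mul_le_self _ _
  have f2 : x * Q < (r + 1) * p := (Nat.div_lt_iff_lt_mul hp).1 (Nat.lt_succ_self _)
  have f3 : r' * p ≤ x' * Q := Nat.div_mul_le_self _ _
  have f4 : x' * Q < (r' + 1) * p := (Nat.div_lt_iff_lt_mul hp).1 (Nat.lt_succ_self _)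
  have hmain : n * (z * Q' + k * Q' * p) = x * Q + n * (x' * Q) := by
    calc n * (z * Q' + k * Q' * p) = (z + p * k) * (n * Q') := by ring
      _ = (x + n * x') * Q := by rw [hzk, hQQ']
      _ = x * Q + n * (x' * Q) := by ring
  have hlow : u * p ≤ z * Q' + k * Q' * p := by
    have hdiv : n * (r / n) ≤ r := Nat.mul_div_le r n
    have : n * (u * p) ≤ n * (z * Q' + k * Q' * p) := by
      calc n * (u * p) = n * (r / n) * p + n * (r' * p) := by rw [hudef]; ring
        _ ≤ r * p + n * (x' * Q) := by
            have := Nat.mul_le_mul_right p hdiv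
            have := Nat.mul_le_mul_left n f3
            omega
        _ ≤ x * Q + n * (x' * Q) := by omega
        _ = n * (z * Q' + k * Q' * p) := hmain.symm
    exact Nat.le_of_mul_le_mul_left this (by omega)
  have hhigh : z * Q' + k * Q' * p < (u + 2) * p := by
    have hdiv2 : r < n * (r / n) + n := by
      calc r < (r / n + 1) * n := lt_div_add_one_mul (by omega)
        _ = n * (r / n) + n := by ring
    have h4 : n * (x' * Q) < n * ((r' + 1) * p) :=
      Nat.mul_lt_mul_of_pos_left f4 (by omega : 0 < n)
    have h5 : n * ((r' + 1) * p) = (n * r' + n) * p := by ring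
    have hsplit : (r + 1 + n * r' + n) * p = (r + 1) * p + (n * r' + n) * p := by ring
    have step1 : x * Q + n * (x' * Q) < (r + 1 + n * r' + n) * p := by omega
    have step2 : (r + 1 + n * r' + n) * p ≤ (n * (r / n) + n * r' + 2 * n) * p :=
      Nat.mul_le_mul_right p (by omega)
    have hux : n * ((u + 2) * p) = (n * (r / n) + n * r' + 2 * n) * p := by
      rw [hudef]
      have : n * ((r' + r / n + 2) * p) = (n * (r / n) + n * r' + 2 * n) * p := by ring
      exact this
    have : n * (z * Q' + k * Q' * p) < n * ((u + 2) * p) := by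
      rw [hmain, hux]; omega
    exact Nat.lt_of_mul_lt_mul_left this
  -- w and j
  set w := z * Q' / p with hwdef
  have hw1 : u ≤ w + k * Q' := by
    have : (z * Q' + k * Q' * p) / p = w + k * Q' := by
      rw [hwdef, Nat.add_mul_div_right _ _ hp]
    rw [← this]
    exact Nat.le_div_iff_mul_le hp |>.2 hlow
  have hw2 : w + k * Q' < u + 2 := by
    have heq : (z * Q' + k * Q' * p) / p = w + k * Q' := by
      rw [hwdef, Nat.add_mul_div_right _ _ hp]
    rw [← heq]
    exact (Nat.div_lt_iff_lt_mul hp).2 hhigh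
  have hwQ' : w < Q' := by
    rw [hwdef]
    apply (Nat.div_lt_iff_lt_mul hp).2
    calc z * Q' < p * Q' := (Nat.mul_lt_mul_right hQ').2 hzp
      _ = Q' * p := by ring
  -- digit memberships
  have hd1 : d = (d - 1) + 1 := by omega
  have hb : r / n ∈ Rset n m (d - 1) := by
    apply div_mem_Rset hm (by omega)
    rw [← hd1]; exact hr
  have hc : r' % Q' ∈ Rset n m (d - 1) := by
    rw [hQ'def]
    apply mod_mem_Rset h2m
    rw [← hd1]; exact hr'
  have hcb : r' % Q' + r / n < Q' := by
    rw [hQ'def]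
    exact Rset_add_lt h2m (d-1) _ hc _ hb
  have humod : u % Q' = r' % Q' + r / n := by
    have : u = (r' % Q' + r / n) + Q' * (r' / Q') := by
      rw [hudef]
      have := Nat.mod_add_div r' Q'
      omega
    rw [this, Nat.add_mul_mod_self_left, Nat.mod_eq_of_lt hcb]
  set j := w + k * Q' - u with hjdef
  have hj2 : j < 2 := by omega
  have hwju : u + j = w + k * Q' := by omega
  have hweq : w = (r' % Q' + r / n + j) % Q' := by
    have e1 : (u + j) % Q' = w := by
      rw [hwju, Nat.mul_comm k Q', Nat.add_mul_mod_self_left, Nat.mod_eq_of_lt hwQ']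
    have e2 : (u + j) % Q' = (r' % Q' + r / n + j) % Q' := by
      conv_lhs => rw [Nat.add_mod]
      conv_rhs => rw [Nat.add_mod]
      rw [humod, Nat.mod_eq_of_lt hcb]
    rw [← e1, e2]
  rw [Finset.mem_image]
  refine ⟨(r' % Q' + r / n, j), ?_, ?_⟩
  · rw [Finset.mem_product]
    exact ⟨Finset.add_mem_add hc hb, Finset.mem_range.2 hj2⟩
  · exact hweq.symm

end ExDAux3

namespace ExDMain
open ExDAux ExDAux2 ExDAux3

theorem main_comb (n m d p : ℕ) (hd : 1 ≤ d) (hm : 1 ≤ m) (h2m : 2 * m ≤ n)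
    (hp : 0 < p) :
    ∃ A : Finset (ZMod p),
      m ^ d * (p / n ^ d - 1) ≤ A.card ∧
      (A + A.image (fun a => (n : ZMod p) * a)).card
        ≤ 2 * (2 * m - 1) ^ (d - 1) * (p / n ^ (d - 1) + 2) := by
  haveI : NeZero p := ⟨hp.ne'⟩
  have hn : 2 ≤ n := by omega
  set Q := n ^ d with hQdef
  set Q' := n ^ (d-1) with hQ'def
  have hQpos : 0 < Q := Nat.pow_pos (by omega)
  have hQ'pos : 0 < Q' := Nat.pow_pos (by omega)
  set S := (Finset.range p).filter (fun x => x * Q / p ∈ Rset n m d) with hSdef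
  set A := S.image (fun x : ℕ => (x : ZMod p)) with hAdef
  refine ⟨A, ?_, ?_⟩
  · -- lower bound on card
    have hinj : Set.InjOn (fun x : ℕ => (x : ZMod p)) S := by
      intro a ha b hb hab
      rw [hSdef, Finset.coe_filter] at ha hb
      simp only [Set.mem_setOf_eq, Finset.mem_range] at ha hb
      have : ((a : ZMod p)).val = ((b : ZMod p)).val := congrArg ZMod.val hab
      rwa [ZMod.val_cast_of_lt ha.1, ZMod.val_cast_of_lt hb.1] at this
    have hcardA : A.card = S.card := Finset.card_image_of_injOn hinj
    have hbi : (Rset n m d).biUnion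
        (fun r => Finset.Ico (r * p / Q + 1) (r * p / Q + p / Q)) ⊆ S := by
      intro x hx
      rw [Finset.mem_biUnion] at hx
      obtain ⟨r, hr, hxr⟩ := hx
      have hrQ : r + 1 ≤ Q := Rset_lt h2m hr
      have := block_subset_fiber hp hQpos hrQ hxr
      rw [Finset.mem_filter] at this
      rw [hSdef, Finset.mem_filter]
      exact ⟨this.1, by rw [this.2]; exact hr⟩
    have hdisj : ∀ r ∈ Rset n m d, ∀ s ∈ Rset n m d, r ≠ s →
        Disjoint (Finset.Ico (r * p / Q + 1) (r * p / Q + p / Q))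
          (Finset.Ico (s * p / Q + 1) (s * p / Q + p / Q)) := by
      intro r hr s hs hrs
      rw [Finset.disjoint_left]
      intro x hxr hxs
      have h1 := block_subset_fiber hp hQpos (Rset_lt h2m hr) hxr
      have h2 := block_subset_fiber hp hQpos (Rset_lt h2m hs) hxs
      rw [Finset.mem_filter] at h1 h2
      exact hrs (h1.2 ▸ h2.2)
    have hbicard : ((Rset n m d).biUnion
        (fun r => Finset.Ico (r * p / Q + 1) (r * p / Q + p / Q))).card
        = m ^ d * (p / Q - 1) := by
      rw [Finset.card_biUnion hdisj]
      have : ∀ r ∈ Rset n m d,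
          (Finset.Ico (r * p / Q + 1) (r * p / Q + p / Q)).card = p / Q - 1 := by
        intro r _
        rw [Nat.card_Ico]
        omega
      rw [Finset.sum_congr rfl this, Finset.sum_const, card_Rset (by omega) (by omega),
        smul_eq_mul]
    calc m ^ d * (p / Q - 1) = _ := hbicard.symm
      _ ≤ S.card := Finset.card_le_card hbi
      _ = A.card := hcardA.symm
  · -- upper bound on sumset card
    set W := ((Rset n m (d-1) + Rset n m (d-1)) ×ˢ Finset.range 2).image
        (fun q => (q.1 + q.2) % Q') with hWdef
    set T := (Finset.range p).filter (fun z => z * Q' / p ∈ W) with hTdef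
    have hsub : A + A.image (fun a => (n : ZMod p) * a)
        ⊆ T.image (fun z : ℕ => (z : ZMod p)) := by
      intro t ht
      rw [Finset.mem_add] at ht
      obtain ⟨a, ha, b, hb, rfl⟩ := ht
      rw [hAdef, Finset.mem_image] at ha
      obtain ⟨x, hx, rfl⟩ := ha
      rw [Finset.mem_image] at hb
      obtain ⟨a', ha', rfl⟩ := hb
      rw [hAdef, Finset.mem_image] at ha'
      obtain ⟨x', hx', rfl⟩ := ha'
      rw [hSdef, Finset.mem_filter, Finset.mem_range] at hx hx'
      set z := (x + n * x') % p with hzdef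
      have hzT : z ∈ T := by
        rw [hTdef, Finset.mem_filter, Finset.mem_range]
        refine ⟨Nat.mod_lt _ hp, ?_⟩
        exact key_lemma hd hm h2m hp hx.1 hx'.1 hx.2 hx'.2
      rw [Finset.mem_image]
      refine ⟨z, hzT, ?_⟩
      rw [hzdef]
      push_cast [ZMod.natCast_mod]
      ring
    have hTcard : T.card ≤ 2 * (2 * m - 1) ^ (d - 1) * (p / Q' + 2) := by
      have hmap : ∀ z ∈ T, z * Q' / p ∈ W := by
        intro z hz
        rw [hTdef, Finset.mem_filter] at hz
        exact hz.2
      rw [Finset.card_eq_sum_card_fiberwise hmap]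
      have hfib : ∀ w ∈ W, (T.filter (fun z => z * Q' / p = w)).card ≤ p / Q' + 2 := by
        intro w _
        calc (T.filter (fun z => z * Q' / p = w)).card
            ≤ ((Finset.range p).filter (fun z => z * Q' / p = w)).card := by
              apply Finset.card_le_card
              intro z hz
              rw [Finset.mem_filter] at hz ⊢
              rw [hTdef, Finset.mem_filter] at hz
              exact ⟨hz.1.1, hz.2⟩
          _ ≤ p / Q' + 2 := fiber_card_le hp hQ'pos w
      calc ∑ w ∈ W, (T.filter (fun z => z * Q' / p = w)).card
          ≤ ∑ _w ∈ W, (p / Q' + 2) := Finset.sum_le_sum hfib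
        _ = W.card * (p / Q' + 2) := by rw [Finset.sum_const, smul_eq_mul]
        _ ≤ (2 * (2 * m - 1) ^ (d - 1)) * (p / Q' + 2) := by
            apply Nat.mul_le_mul_right
            calc W.card ≤ ((Rset n m (d-1) + Rset n m (d-1)) ×ˢ Finset.range 2).card :=
                  Finset.card_image_le
              _ = (Rset n m (d-1) + Rset n m (d-1)).card * 2 := by
                  rw [Finset.card_product, Finset.card_range]
              _ ≤ (2 * m - 1) ^ (d - 1) * 2 :=
                  Nat.mul_le_mul_right 2 (card_Rset_add_Rset hm h2m _)
              _ = 2 * (2 * m - 1) ^ (d - 1) := by ring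
        _ = 2 * (2 * m - 1) ^ (d - 1) * (p / Q' + 2) := by ring
    calc (A + A.image (fun a => (n : ZMod p) * a)).card
        ≤ (T.image (fun z : ℕ => (z : ZMod p))).card := Finset.card_le_card hsub
      _ ≤ T.card := Finset.card_image_le
      _ ≤ 2 * (2 * m - 1) ^ (d - 1) * (p / Q' + 2) := hTcard

end ExDMain

section Glue

lemma exZMod_bddBelow (p : ℕ) (lam : ℤ) (α : ℝ) :
    BddBelow {x : ℝ | ∃ A : Finset (ZMod p), α * p ≤ (A.card : ℝ) ∧
      x = (((A + A.image fun a => (lam : ZMod p) * a).card : ℝ)) / p} := by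
  refine ⟨0, ?_⟩
  rintro x ⟨A, hA, rfl⟩
  positivity

lemma exZMod_nonneg (p : ℕ) (lam : ℤ) (α : ℝ) : 0 ≤ exZMod p lam α := by
  apply Real.sInf_nonneg
  rintro x ⟨A, hA, rfl⟩
  positivity

lemma exZMod_le_of_exists {p : ℕ} {lam : ℤ} {α b : ℝ}
    (h : ∃ A : Finset (ZMod p), α * p ≤ (A.card : ℝ) ∧
      (((A + A.image fun a => (lam : ZMod p) * a).card : ℝ)) / p ≤ b) :
    exZMod p lam α ≤ b := by
  obtain ⟨A, hA, hb⟩ := h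
  exact csInf_le_of_le (exZMod_bddBelow p lam α) ⟨A, hA, rfl⟩ hb

lemma exZMod_le_one {p : ℕ} (hp : 0 < p) {lam : ℤ} {α : ℝ} (hα1 : α ≤ 1) :
    exZMod p lam α ≤ 1 := by
  haveI : NeZero p := ⟨hp.ne'⟩
  apply exZMod_le_of_exists
  refine ⟨Finset.univ, ?_, ?_⟩
  · rw [Finset.card_univ, ZMod.card p]
    calc α * p ≤ 1 * p := by
          apply mul_le_mul_of_nonneg_right hα1 (by positivity)
      _ = p := by ring
  · rw [div_le_one (by exact_mod_cast hp)]
    have := Finset.card_le_univ (Finset.univ + Finset.univ.image fun a => (lam : ZMod p) * a)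
    calc ((Finset.univ + Finset.univ.image fun a => (lam : ZMod p) * a).card : ℝ)
        ≤ (Fintype.card (ZMod p) : ℝ) := by exact_mod_cast this
      _ = p := by rw [ZMod.card p]

lemma primesFilter_neBot :
    (Filter.atTop ⊓ Filter.principal {p : ℕ | p.Prime}).NeBot := by
  rw [← Filter.frequently_mem_iff_neBot]
  rw [Filter.frequently_atTop]
  intro a
  obtain ⟨p, hap, hp⟩ := Nat.exists_infinite_primes a
  exact ⟨p, hap, hp⟩

lemma eventually_primes (P : ℕ → Prop) (h : ∀ᶠ p in Filter.atTop, P p) :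
    ∀ᶠ p in Filter.atTop ⊓ Filter.principal {p : ℕ | p.Prime}, P p ∧ p.Prime := by
  have h2 : ∀ᶠ p in Filter.atTop ⊓ Filter.principal {p : ℕ | p.Prime}, P p :=
    Filter.Eventually.filter_mono inf_le_left h
  have h3 : ∀ᶠ p in Filter.atTop ⊓ Filter.principal {p : ℕ | p.Prime}, p.Prime := by
    apply Filter.Eventually.filter_mono inf_le_right
    exact Filter.eventually_principal.2 (fun x hx => hx)
  exact h2.and h3

lemma exLam_nonneg (lam : ℤ) {α : ℝ} (hα1 : α ≤ 1) : 0 ≤ exLam lam α := by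
  haveI := primesFilter_neBot
  apply Filter.le_limsup_of_frequently_le
  · apply Filter.Eventually.frequently
    exact Filter.Eventually.of_forall (fun p => exZMod_nonneg p lam α)
  · refine ⟨1, ?_⟩
    rw [Filter.eventually_map]
    have := eventually_primes (fun _ => True) (Filter.Eventually.of_forall (fun _ => trivial))
    filter_upwards [this] with p hp
    exact exZMod_le_one hp.2.pos hα1

lemma exLam_le {lam : ℤ} {α b : ℝ}
    (h : ∀ᶠ p in Filter.atTop ⊓ Filter.principal {p : ℕ | p.Prime}, exZMod p lam α ≤ b) :
    exLam lam α ≤ b := by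
  haveI := primesFilter_neBot
  apply Filter.limsup_le_of_le ?_ h
  exact Filter.isCoboundedUnder_le_of_le _ (fun p => exZMod_nonneg p lam α)

lemma exD_le {α b : ℝ} (hα1 : α ≤ 1)
    (h : ∀ᶠ lam : ℤ in Filter.atTop, exLam lam α ≤ b) : exD α ≤ b := by
  apply Filter.limsup_le_of_le ?_ h
  exact Filter.isCoboundedUnder_le_of_le _ (fun lam => exLam_nonneg lam hα1)

end Glue


section PerNP

lemma eight_exp_bound {s x : ℝ} (hs : 10 < s) (hx : x ≤ 2 * s) :
    8 * Real.exp x + 1 ≤ Real.exp (10 * s) := by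
  have h1 : Real.exp x ≤ Real.exp (2 * s) := Real.exp_le_exp.2 hx
  have h2 : Real.exp (10 * s) = Real.exp (2 * s) * Real.exp (8 * s) := by
    rw [← Real.exp_add]; ring_nf
  have h3 : (9:ℝ) ≤ Real.exp (8 * s) := by
    have h0 : (80:ℝ) + 1 ≤ Real.exp 80 := Real.add_one_le_exp 80
    have h4 : Real.exp 80 ≤ Real.exp (8 * s) := Real.exp_le_exp.2 (by linarith)
    linarith
  have h5 : (1:ℝ) ≤ Real.exp (2 * s) := Real.one_le_exp (by linarith)
  have h6 : Real.exp (2*s) * 9 ≤ Real.exp (2*s) * Real.exp (8*s) :=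
    mul_le_mul_of_nonneg_left h3 (Real.exp_pos (2*s)).le
  linarith only [h1, h2, h5, h6]

set_option maxHeartbeats 2000000 in
lemma per_np (α : ℝ) (hα0 : 0 < α) (hα2 : α < 1/2) (hL : 100 < Real.log (1/α))
    (d n p : ℕ)
    (hds : Real.sqrt (Real.log (1/α)) ≤ (d:ℝ))
    (hdle : (d:ℝ) ≤ Real.sqrt (Real.log (1/α)) + 1)
    (hn2 : 2 ≤ n)
    (hng : (((2*α)^((d:ℝ)⁻¹) * ((2:ℝ)^((d:ℝ)⁻¹) - 1))⁻¹) ≤ (n:ℝ))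
    (hp : 0 < p) (hp1 : 2*(n:ℝ)^d ≤ α * p) :
    ∃ A : Finset (ZMod p), α * p ≤ (A.card:ℝ) ∧
      ((A + A.image (fun a => (n : ZMod p) * a)).card : ℝ)
        ≤ Real.exp (10 * Real.sqrt (Real.log (1/α))) * α * p := by
  set L := Real.log (1/α) with hLdef
  set s := Real.sqrt L with hsdef
  have hL0 : (0:ℝ) < L := by linarith
  have hs10 : 10 < s := by
    have : (10:ℝ) = Real.sqrt 100 := by
      rw [show (100:ℝ) = 10^2 by norm_num, Real.sqrt_sq (by norm_num)]
    rw [this, hsdef]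
    exact Real.sqrt_lt_sqrt (by norm_num) hL
  have hs0 : 0 < s := by linarith
  have hss : s * s = L := Real.mul_self_sqrt hL0.le
  have hd0 : (0:ℝ) < d := lt_of_lt_of_le (by linarith) hds
  have hdnat : d ≠ 0 := by exact_mod_cast hd0.ne'
  have h2α0 : (0:ℝ) < 2*α := by linarith
  have h2α1 : 2*α < 1 := by linarith
  set β := (2*α)^((d:ℝ)⁻¹) with hβdef
  have hβ0 : 0 < β := Real.rpow_pos_of_pos h2α0 _
  have hβd : β ^ d = 2*α := Real.rpow_inv_natCast_pow h2α0.le hdnat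
  set γ := β * (2:ℝ)^((d:ℝ)⁻¹) with hγdef
  have h2pow : ((2:ℝ)^((d:ℝ)⁻¹)) ^ d = 2 := Real.rpow_inv_natCast_pow (by norm_num) hdnat
  have hγ0 : 0 < γ := by
    have : (0:ℝ) < (2:ℝ)^((d:ℝ)⁻¹) := Real.rpow_pos_of_pos (by norm_num) _
    positivity
  have hγd : γ ^ d = 4*α := by
    rw [hγdef, mul_pow, hβd, h2pow]; ring
  have hlog2 : Real.log 2 < 0.6931471808 := Real.log_two_lt_d9
  have hlog2_0 : 0 < Real.log 2 := Real.log_pos (by norm_num)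
  have hlogL : Real.log α = -L := by
    rw [hLdef, one_div, Real.log_inv, neg_neg]
  -- γ ≤ 1/2
  have hγhalf : γ ≤ 1/2 := by
    by_contra h
    push_neg at h
    have hpow : (1/2:ℝ)^d < γ^d := by
      apply pow_lt_pow_left₀ h (by norm_num) hdnat
    rw [hγd] at hpow
    have hlog : Real.log ((1/2:ℝ)^d) < Real.log (4*α) := by
      apply Real.log_lt_log (by positivity) hpow
    rw [Real.log_pow, Real.log_mul (by norm_num) hα0.ne', hlogL,
      show (1/2:ℝ) = 2⁻¹ by norm_num, Real.log_inv] at hlog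
    have hlog4 : Real.log 4 < 2 := by
      rw [show (4:ℝ) = 2^2 by norm_num, Real.log_pow]
      push_cast
      nlinarith
    have hdle' : (d:ℝ) * Real.log 2 ≤ (s+1) * 0.6931471808 := by
      apply mul_le_mul hdle (le_of_lt hlog2) (le_of_lt hlog2_0) (by linarith)
    have e1 : (s+1) * 0.6931471808 = 0.6931471808*s + 0.6931471808 := by ring
    have e2 : s * 10 < s * s := mul_lt_mul_of_pos_left hs10 hs0
    linarith only [hlog, hdle', hlog4, hss, e1, e2, hs10]
  have hβlow : Real.exp (-s) ≤ β := by
    rw [hβdef, Real.rpow_def_of_pos h2α0]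
    apply Real.exp_le_exp.2
    have hlog2α : Real.log (2*α) = Real.log 2 - L := by
      rw [Real.log_mul (by norm_num) hα0.ne', hlogL]; ring
    rw [hlog2α]
    have h1 : L - Real.log 2 ≤ s * (d:ℝ) := by
      have h0 : s * s ≤ s * (d:ℝ) := mul_le_mul_of_nonneg_left hds hs0.le
      linarith only [h0, hss, hlog2_0]
    have h2 : (L - Real.log 2) / (d:ℝ) ≤ s := (div_le_iff₀ hd0).2 h1
    have h3 : (L - Real.log 2) / (d:ℝ) = (L - Real.log 2) * ((d:ℝ))⁻¹ :=
      div_eq_mul_inv _ _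
    have h4 : (Real.log 2 - L) * ((d:ℝ))⁻¹ = -((L - Real.log 2) * ((d:ℝ))⁻¹) := by ring
    linarith
  -- choose m
  have hn0 : (0:ℝ) < (n:ℝ) := by positivity
  have hnβ0 : 0 < (n:ℝ)*β := by positivity
  set m := ⌈(n:ℝ)*β⌉₊ with hmdef
  have hm1 : 1 ≤ m := Nat.one_le_iff_ne_zero.2 (Nat.ceil_pos.2 hnβ0).ne'
  have hmlow : (n:ℝ)*β ≤ (m:ℝ) := Nat.le_ceil _
  have h2pow1 : 1 < (2:ℝ)^((d:ℝ)⁻¹) :=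
    (Real.one_lt_rpow_iff_of_pos (by norm_num)).2 (Or.inl ⟨by norm_num, by positivity⟩)
  have hcpos : 0 < β * ((2:ℝ)^((d:ℝ)⁻¹) - 1) := mul_pos hβ0 (by linarith)
  have hn_ge : 1 ≤ (n:ℝ) * (β * ((2:ℝ)^((d:ℝ)⁻¹) - 1)) := by
    have h := mul_le_mul_of_nonneg_right hng hcpos.le
    rwa [inv_mul_cancel₀ hcpos.ne'] at h
  have hmup : (m:ℝ) ≤ (n:ℝ) * γ := by
    have h1 : (m:ℝ) < (n:ℝ)*β + 1 := Nat.ceil_lt_add_one hnβ0.le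
    have h2 : (n:ℝ)*β + 1 ≤ (n:ℝ)*γ := by
      rw [hγdef]
      have e : (n:ℝ)*(β*(2:ℝ)^((d:ℝ)⁻¹))
          = (n:ℝ)*β + (n:ℝ)*(β*((2:ℝ)^((d:ℝ)⁻¹) - 1)) := by ring
      linarith only [hn_ge, e]
    linarith
  have h2m : 2*m ≤ n := by
    have h0 : (n:ℝ)*γ ≤ (n:ℝ)*(1/2) := mul_le_mul_of_nonneg_left hγhalf hn0.le
    have h : ((2*m:ℕ):ℝ) ≤ (n:ℝ) := by push_cast; linarith only [hmup, h0]
    exact_mod_cast h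
  have hd1 : 1 ≤ d := Nat.one_le_iff_ne_zero.2 hdnat
  obtain ⟨A, hAlow, hAup⟩ := ExDMain.main_comb n m d p hd1 hm1 h2m hp
  refine ⟨A, ?_, ?_⟩
  · -- lower bound
    have hQcast : (0:ℝ) < (n:ℝ)^d := by positivity
    have hp0 : (0:ℝ) < (p:ℝ) := by exact_mod_cast hp
    have hpn : (n:ℕ)^d ≤ p := by
      have h0 : α * (p:ℝ) ≤ (1/2) * (p:ℝ) :=
        mul_le_mul_of_nonneg_right hα2.le hp0.le
      have h : ((n:ℕ)^d : ℝ) ≤ (p:ℝ) := by push_cast; linarith only [hp1, h0, hp0]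
      exact_mod_cast h
    have hnd0 : 0 < n^d := Nat.pow_pos (by omega)
    have hpQ1 : 1 ≤ p / n^d := (Nat.one_le_div_iff hnd0).2 hpn
    set Fl : ℝ := ((p / n^d : ℕ) : ℝ) with hFldef
    have hfloor : (p:ℝ)/(n:ℝ)^d - 1 ≤ Fl := by
      have h1 : p < (p / n^d + 1) * n^d := ExDAux2.lt_div_add_one_mul hnd0
      have h1' : (p:ℝ) < (Fl + 1) * (n:ℝ)^d := by
        rw [hFldef]; exact_mod_cast h1
      have h2 : (p:ℝ)/(n:ℝ)^d < Fl + 1 := (div_lt_iff₀ hQcast).2 h1'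
      linarith
    have hAcard : (m:ℝ)^d * (Fl - 1) ≤ (A.card : ℝ) := by
      have h := (Nat.cast_le (α := ℝ)).2 hAlow
      rwa [Nat.cast_mul, Nat.cast_pow, Nat.cast_sub hpQ1, Nat.cast_one] at h
    have hmd2α : 2*α*(p:ℝ) ≤ (m:ℝ)^d * ((p:ℝ)/(n:ℝ)^d) := by
      have h1 : ((n:ℝ)*β)^d ≤ (m:ℝ)^d := pow_le_pow_left₀ hnβ0.le hmlow d
      have h2 : ((n:ℝ)*β)^d = (n:ℝ)^d * (2*α) := by rw [mul_pow, hβd]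
      have h3 : (n:ℝ)^d * (2*α) * ((p:ℝ)/(n:ℝ)^d) ≤ (m:ℝ)^d * ((p:ℝ)/(n:ℝ)^d) :=
        mul_le_mul_of_nonneg_right (h2 ▸ h1) (by positivity)
      calc 2*α*(p:ℝ) = (n:ℝ)^d * (2*α) * ((p:ℝ)/(n:ℝ)^d) := by field_simp
        _ ≤ (m:ℝ)^d * ((p:ℝ)/(n:ℝ)^d) := h3
    have hmn : (m:ℝ)^d ≤ (n:ℝ)^d := by
      apply pow_le_pow_left₀ (by positivity)
      exact_mod_cast (by omega : m ≤ n)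
    have hmd0 : (0:ℝ) ≤ (m:ℝ)^d := by positivity
    have step : (m:ℝ)^d * (Fl - 1) ≥ (m:ℝ)^d * ((p:ℝ)/(n:ℝ)^d - 2) :=
      mul_le_mul_of_nonneg_left (by linarith) hmd0
    have expand : (m:ℝ)^d * ((p:ℝ)/(n:ℝ)^d - 2)
        = (m:ℝ)^d * ((p:ℝ)/(n:ℝ)^d) - 2*(m:ℝ)^d := by ring
    linarith only [hAcard, step, expand, hmd2α, hmn, hp1]
  · -- upper bound
    have hp0 : (0:ℝ) < (p:ℝ) := by exact_mod_cast hp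
    have hQ'cast : (0:ℝ) < (n:ℝ)^(d-1) := by positivity
    have hnd'0 : 0 < n^(d-1) := Nat.pow_pos (by omega)
    have hup0 : ((A + A.image (fun a => (n : ZMod p) * a)).card : ℝ)
        ≤ 2*(2*(m:ℝ))^(d-1) * ((p:ℝ)/(n:ℝ)^(d-1) + 2) := by
      have h := (Nat.cast_le (α := ℝ)).2 hAup
      have hc1 : ((2*m-1 : ℕ):ℝ) ≤ 2*(m:ℝ) := by
        have : (2*m-1:ℕ) ≤ 2*m := by omega
        calc ((2*m-1:ℕ):ℝ) ≤ ((2*m:ℕ):ℝ) := by exact_mod_cast this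
          _ = 2*(m:ℝ) := by push_cast; ring
      have hc2 : ((p / n^(d-1) : ℕ):ℝ) ≤ (p:ℝ)/(n:ℝ)^(d-1) := by
        calc ((p / n^(d-1) : ℕ):ℝ) ≤ (p:ℝ)/((n^(d-1):ℕ):ℝ) := Nat.cast_div_le
          _ = (p:ℝ)/(n:ℝ)^(d-1) := by push_cast; ring
      have hc1' : ((2*m-1 : ℕ):ℝ)^(d-1) ≤ (2*(m:ℝ))^(d-1) :=
        pow_le_pow_left₀ (by positivity) hc1 _
      calc ((A + A.image (fun a => (n : ZMod p) * a)).card : ℝ)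
          ≤ ((2 * (2 * m - 1) ^ (d - 1) * (p / n ^ (d - 1) + 2) : ℕ) : ℝ) := h
        _ = 2 * ((2*m-1:ℕ):ℝ)^(d-1) * (((p / n^(d-1) : ℕ):ℝ) + 2) := by push_cast; ring
        _ ≤ 2*(2*(m:ℝ))^(d-1) * ((p:ℝ)/(n:ℝ)^(d-1) + 2) := by
            apply mul_le_mul
            · apply mul_le_mul_of_nonneg_left hc1' (by norm_num)
            · linarith
            · positivity
            · positivity
    -- now bound the RHS
    have hγβ : β ≤ γ := by
      rw [hγdef]
      calc β = β * 1 := by ring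
        _ ≤ β * (2:ℝ)^((d:ℝ)⁻¹) := mul_le_mul_of_nonneg_left h2pow1.le hβ0.le
    have hγinvexp : γ⁻¹ ≤ Real.exp s := by
      have h1 : β⁻¹ ≤ (Real.exp (-s))⁻¹ := by
        apply inv_anti₀ (Real.exp_pos _) hβlow
      have h2 : γ⁻¹ ≤ β⁻¹ := by
        apply inv_anti₀ hβ0 hγβ
      rw [← Real.exp_neg, neg_neg] at h1
      linarith
    have hγd1 : γ^(d-1) = 4*α * γ⁻¹ := by
      have h1 : γ^(d-1) * γ = γ^d := by
        rw [← pow_succ]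
        congr 1
        omega
      have h2 : γ^(d-1) = γ^d * γ⁻¹ := by
        rw [← h1, mul_assoc, mul_inv_cancel₀ hγ0.ne', mul_one]
      rw [h2, hγd]
    have hmn2 : 2*(m:ℝ)/(n:ℝ) ≤ 2*γ := by
      rw [div_le_iff₀ hn0]
      linarith only [hmup]
    have hpow1 : (2*(m:ℝ))^(d-1) ≤ (2*γ)^(d-1) * (n:ℝ)^(d-1) := by
      have h1 : (2*(m:ℝ)/(n:ℝ))^(d-1) ≤ (2*γ)^(d-1) :=
        pow_le_pow_left₀ (by positivity) hmn2 _
      have h2 : (2*(m:ℝ))^(d-1) = (2*(m:ℝ)/(n:ℝ))^(d-1) * (n:ℝ)^(d-1) := by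
        rw [div_pow]
        field_simp
      rw [h2]
      exact mul_le_mul_of_nonneg_right h1 (by positivity)
    have h2pow_exp : (2:ℝ)^(d-1) ≤ Real.exp ((d:ℝ) * Real.log 2) := by
      have h1 : (2:ℝ)^(d-1) ≤ (2:ℝ)^d := pow_le_pow_right₀ (by norm_num) (by omega)
      have h2 : Real.exp ((d:ℝ) * Real.log 2) = (2:ℝ)^d := by
        rw [Real.exp_nat_mul, Real.exp_log (show (0:ℝ) < 2 by norm_num)]
      linarith
    have hdlog2 : (d:ℝ) * Real.log 2 + s ≤ 2*s := by
      have h1 : (d:ℝ) * Real.log 2 ≤ (s+1) * 0.6931471808 :=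
        mul_le_mul hdle hlog2.le hlog2_0.le (by linarith)
      have e1 : (s+1) * 0.6931471808 = 0.6931471808*s + 0.6931471808 := by ring
      linarith only [h1, e1, hs10]
    -- (2γ)^{d-1} = 2^{d-1} γ^{d-1} ≤ exp(d log 2) * 4α exp s
    have hkey : (2*γ)^(d-1) ≤ 4*α*Real.exp ((d:ℝ) * Real.log 2 + s) := by
      rw [mul_pow, hγd1, Real.exp_add]
      have hα4 : (0:ℝ) ≤ 4*α := by linarith
      calc (2:ℝ)^(d-1) * (4*α*γ⁻¹)
          ≤ Real.exp ((d:ℝ)*Real.log 2) * (4*α*Real.exp s) := by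
            apply mul_le_mul h2pow_exp ?_ ?_ (Real.exp_pos _).le
            · exact mul_le_mul_of_nonneg_left hγinvexp hα4
            · positivity
        _ = 4*α*(Real.exp ((d:ℝ)*Real.log 2) * Real.exp s) := by ring
    have hterm1 : 2*(2*(m:ℝ))^(d-1) * ((p:ℝ)/(n:ℝ)^(d-1))
        ≤ 8 * Real.exp (2*s) * (α*(p:ℝ)) := by
      have h1 : 2*(2*(m:ℝ))^(d-1) * ((p:ℝ)/(n:ℝ)^(d-1))
          ≤ 2*((2*γ)^(d-1) * (n:ℝ)^(d-1)) * ((p:ℝ)/(n:ℝ)^(d-1)) := by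
        apply mul_le_mul_of_nonneg_right ?_ (by positivity)
        apply mul_le_mul_of_nonneg_left hpow1 (by norm_num)
      have h2 : 2*((2*γ)^(d-1) * (n:ℝ)^(d-1)) * ((p:ℝ)/(n:ℝ)^(d-1))
          = 2*(2*γ)^(d-1) * (p:ℝ) := by
        field_simp
      have h3 : 2*(2*γ)^(d-1) * (p:ℝ) ≤ 2*(4*α*Real.exp ((d:ℝ) * Real.log 2 + s)) * (p:ℝ) := by
        apply mul_le_mul_of_nonneg_right ?_ hp0.le
        apply mul_le_mul_of_nonneg_left hkey (by norm_num)
      have h4 : Real.exp ((d:ℝ) * Real.log 2 + s) ≤ Real.exp (2*s) :=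
        Real.exp_le_exp.2 hdlog2
      have h5 : 2*(4*α*Real.exp ((d:ℝ) * Real.log 2 + s)) * (p:ℝ)
          ≤ 8 * Real.exp (2*s) * (α*(p:ℝ)) := by
        have h6 : Real.exp ((d:ℝ) * Real.log 2 + s) * (8*(α*(p:ℝ)))
            ≤ Real.exp (2*s) * (8*(α*(p:ℝ))) :=
          mul_le_mul_of_nonneg_right h4 (by positivity)
        linarith only [h6]
      linarith
    have hterm2 : 2*(2*(m:ℝ))^(d-1) * 2 ≤ α*(p:ℝ) := by
      -- 4 (2m)^{d-1} ≤ 4 n^{d-1} ≤ 2 n^d ≤ α p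
      have h2mn : (2*(m:ℝ)) ≤ (n:ℝ) := by
        have : ((2*m:ℕ):ℝ) ≤ ((n:ℕ):ℝ) := by exact_mod_cast h2m
        push_cast at this
        linarith
      have h1 : (2*(m:ℝ))^(d-1) ≤ (n:ℝ)^(d-1) := pow_le_pow_left₀ (by positivity) h2mn _
      have h2 : 2*(n:ℝ)^(d-1) ≤ (n:ℝ)^d := by
        have e : (n:ℝ)^d = (n:ℝ)^(d-1) * (n:ℝ) := by
          rw [← pow_succ]
          congr 1
          omega
        rw [e]
        have hn2' : (2:ℝ) ≤ (n:ℝ) := by exact_mod_cast hn2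
        have h3 : (n:ℝ)^(d-1) * 2 ≤ (n:ℝ)^(d-1) * (n:ℝ) :=
          mul_le_mul_of_nonneg_left hn2' (by positivity)
        linarith only [h3]
      linarith only [h1, h2, hp1]
    have htot : ((A + A.image (fun a => (n : ZMod p) * a)).card : ℝ)
        ≤ (8 * Real.exp (2*s) + 1) * (α * (p:ℝ)) := by
      have expand : 2*(2*(m:ℝ))^(d-1) * ((p:ℝ)/(n:ℝ)^(d-1) + 2)
          = 2*(2*(m:ℝ))^(d-1) * ((p:ℝ)/(n:ℝ)^(d-1)) + 2*(2*(m:ℝ))^(d-1) * 2 := by ring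
      linarith only [hup0, expand, hterm1, hterm2]
    have hfin : (8 * Real.exp (2*s) + 1) ≤ Real.exp (10*s) :=
      eight_exp_bound hs10 (le_refl _)
    have hαp : (0:ℝ) ≤ α * (p:ℝ) := by positivity
    calc ((A + A.image (fun a => (n : ZMod p) * a)).card : ℝ)
        ≤ (8 * Real.exp (2*s) + 1) * (α * (p:ℝ)) := htot
      _ ≤ Real.exp (10*s) * (α * (p:ℝ)) := mul_le_mul_of_nonneg_right hfin hαp
      _ = Real.exp (10*s) * α * (p:ℝ) := by ring

end PerNP

set_option maxHeartbeats 1000000 in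
/-- There exists a constant `C > 0` such that for all `α ∈ (0, 1/2)`,
`ex(α) ≤ e^{C·√(log(1/α))}·α`. -/
theorem exD_upper_bound :
    ∃ C : ℝ, 0 < C ∧ ∀ α : ℝ, 0 < α → α < 1 / 2 →
      exD α ≤ Real.exp (C * Real.sqrt (Real.log (1 / α))) * α := by
  refine ⟨10, by norm_num, ?_⟩
  intro α hα0 hα2
  set L := Real.log (1 / α) with hLdef
  have hα1 : α ≤ 1 := by linarith
  have hL0 : 0 < L := by
    apply Real.log_pos
    rw [lt_div_iff₀ hα0]
    linarith
  set s := Real.sqrt L with hsdef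
  have hs0 : 0 ≤ s := Real.sqrt_nonneg L
  have hss : s * s = L := Real.mul_self_sqrt hL0.le
  by_cases hc : L ≤ 100
  · -- small L : use the trivial bound exZMod ≤ 1 ≤ B
    have hs10 : s ≤ 10 := by
      calc s ≤ Real.sqrt 100 := Real.sqrt_le_sqrt hc
        _ = 10 := by rw [show (100:ℝ) = 10^2 by norm_num, Real.sqrt_sq (by norm_num)]
    have h1B : 1 ≤ Real.exp (10 * s) * α := by
      have hLs : L ≤ 10 * s := by nlinarith
      have hexp : Real.exp L ≤ Real.exp (10 * s) := Real.exp_le_exp.2 hLs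
      have hαexp : α = Real.exp (-L) := by
        rw [hLdef, one_div, Real.log_inv, neg_neg, Real.exp_log hα0]
      calc (1:ℝ) = Real.exp L * Real.exp (-L) := by rw [← Real.exp_add]; simp
        _ ≤ Real.exp (10 * s) * Real.exp (-L) :=
            mul_le_mul_of_nonneg_right hexp (Real.exp_pos _).le
        _ = Real.exp (10 * s) * α := by rw [← hαexp]
    apply exD_le hα1
    apply Filter.Eventually.of_forall
    intro lam
    apply exLam_le
    filter_upwards [eventually_primes (fun _ => True)
      (Filter.Eventually.of_forall fun _ => trivial)] with p hp
    exact (exZMod_le_one hp.2.pos hα1).trans h1B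
  · push_neg at hc
    set d := ⌈s⌉₊ with hddef
    have hds : s ≤ (d:ℝ) := Nat.le_ceil s
    have hdle : (d:ℝ) ≤ s + 1 := (Nat.ceil_lt_add_one hs0).le
    set c : ℝ := ((2*α)^((d:ℝ)⁻¹) * ((2:ℝ)^((d:ℝ)⁻¹) - 1))⁻¹ with hcdef
    apply exD_le hα1
    rw [Filter.eventually_atTop]
    refine ⟨max 2 (⌈c⌉₊ : ℤ), fun lam hlam => ?_⟩
    have hlam2 : (2:ℤ) ≤ lam := le_trans (le_max_left _ _) hlam
    set n := lam.toNat with hndef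
    have hn2 : 2 ≤ n := by omega
    have hnlam : (n:ℤ) = lam := Int.toNat_of_nonneg (by omega)
    have hnc : c ≤ (n:ℝ) := by
      have h1 : (⌈c⌉₊:ℤ) ≤ lam := le_trans (le_max_right _ _) hlam
      have h2 : (⌈c⌉₊:ℝ) ≤ (n:ℝ) := by exact_mod_cast (by omega : (⌈c⌉₊:ℤ) ≤ (n:ℤ))
      exact le_trans (Nat.le_ceil c) h2
    apply exLam_le
    have hev : ∀ᶠ q : ℕ in Filter.atTop, max 1 ⌈2*(n:ℝ)^d/α⌉₊ ≤ q :=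
      Filter.eventually_ge_atTop _
    filter_upwards [eventually_primes _ hev] with p hp
    obtain ⟨hpge, _⟩ := hp
    have hp0 : 0 < p := lt_of_lt_of_le (by norm_num) (le_trans (le_max_left _ _) hpge)
    have hp1 : 2*(n:ℝ)^d ≤ α * p := by
      have h1 : (⌈2*(n:ℝ)^d/α⌉₊ : ℝ) ≤ (p:ℝ) := by
        exact_mod_cast le_trans (le_max_right _ _) hpge
      have h2 : 2*(n:ℝ)^d/α ≤ (p:ℝ) := le_trans (Nat.le_ceil _) h1
      rw [div_le_iff₀ hα0] at h2
      calc 2*(n:ℝ)^d ≤ (p:ℝ) * α := h2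
        _ = α * p := by ring
    obtain ⟨A, hAcard, hAbound⟩ := per_np α hα0 hα2 hc d n p hds hdle hn2 hnc hp0 hp1
    apply exZMod_le_of_exists
    refine ⟨A, hAcard, ?_⟩
    have hcast : ((lam : ℤ) : ZMod p) = ((n:ℕ) : ZMod p) := by
      rw [← hnlam]
      push_cast
      ring
    have himg : (A.image fun a => ((lam:ℤ) : ZMod p) * a)
        = (A.image fun a => ((n:ℕ) : ZMod p) * a) := by
      simp only [hcast]
    rw [himg, div_le_iff₀ (by exact_mod_cast hp0 : (0:ℝ) < (p:ℝ))]
    exact hAbound
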